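/- In the causal model with edges X → Z, Z → Y, X → Y and latent confounder X ↔ Z, the conditional counterfactual P(Y_x = y | Z_x = z, X = x') equals the observational conditional probability P(Y = y | X = x, Z = z), provided both conditioning events have positive probability. -/

import Mathlib

open MeasureTheory ProbabilityTheory

section Aux

variable {Ω : Type*} [MeasurableSpace Ω] (μ : Measure Ω) [IsProbabilityMeasure μ]
  {E1 E2 E3 E4 : Type*}
  [MeasurableSpace E1] [MeasurableSpace E2] [MeasurableSpace E3] [MeasurableSpace E4]
  (U1 : Ω → E1) (U2 : Ω → E2) (U3 : Ω → E3) (U4 : Ω → E4)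

/-- From joint product structure of four exogenous variables, the first three (jointly)
are independent of the fourth: intersection probabilities factorize. -/
lemma factor_lemma
    (hU1 : Measurable U1) (hU2 : Measurable U2) (hU3 : Measurable U3) (hU4 : Measurable U4)
    (hindep : μ.map (fun ω => (U1 ω, U2 ω, U3 ω, U4 ω)) =
      ((μ.map U1).prod ((μ.map U2).prod ((μ.map U3).prod (μ.map U4)))))
    {S : Set (E1 × E2 × E3)} (hS : MeasurableSet S) {T : Set E4} (hT : MeasurableSet T) :
    μ ({ω | (U1 ω, U2 ω, U3 ω) ∈ S} ∩ {ω | U4 ω ∈ T}) =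
      μ {ω | (U1 ω, U2 ω, U3 ω) ∈ S} * μ {ω | U4 ω ∈ T} := by
  have h1 : IsProbabilityMeasure (μ.map U1) := Measure.isProbabilityMeasure_map hU1.aemeasurable
  have h2 : IsProbabilityMeasure (μ.map U2) := Measure.isProbabilityMeasure_map hU2.aemeasurable
  have h3 : IsProbabilityMeasure (μ.map U3) := Measure.isProbabilityMeasure_map hU3.aemeasurable
  have h4 : IsProbabilityMeasure (μ.map U4) := Measure.isProbabilityMeasure_map hU4.aemeasurable
  -- reassociation map
  set g : E1 × E2 × E3 × E4 → (E1 × E2 × E3) × E4 :=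
    fun p => ((p.1, p.2.1, p.2.2.1), p.2.2.2) with hg
  have hgmeas : Measurable g := by
    apply Measurable.prodMk
    · exact measurable_fst.prodMk
        ((measurable_fst.comp measurable_snd).prodMk
          (measurable_fst.comp (measurable_snd.comp measurable_snd)))
    · exact measurable_snd.comp (measurable_snd.comp measurable_snd)
  have hmp : MeasurePreserving g
      ((μ.map U1).prod ((μ.map U2).prod ((μ.map U3).prod (μ.map U4))))
      (((μ.map U1).prod ((μ.map U2).prod (μ.map U3))).prod (μ.map U4)) := by
    have step1 : MeasurePreserving
        (Prod.map (id : E1 → E1)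
          (MeasurableEquiv.prodAssoc.symm : E2 × E3 × E4 → (E2 × E3) × E4))
        ((μ.map U1).prod ((μ.map U2).prod ((μ.map U3).prod (μ.map U4))))
        ((μ.map U1).prod (((μ.map U2).prod (μ.map U3)).prod (μ.map U4))) :=
      (MeasurePreserving.id _).prod
        (measurePreserving_prodAssoc (μ.map U2) (μ.map U3) (μ.map U4)).symm
    have step2 : MeasurePreserving
        (MeasurableEquiv.prodAssoc.symm : E1 × (E2 × E3) × E4 → (E1 × (E2 × E3)) × E4)
        ((μ.map U1).prod (((μ.map U2).prod (μ.map U3)).prod (μ.map U4)))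
        (((μ.map U1).prod ((μ.map U2).prod (μ.map U3))).prod (μ.map U4)) :=
      (measurePreserving_prodAssoc (μ.map U1) ((μ.map U2).prod (μ.map U3)) (μ.map U4)).symm
    have hcomp := step2.comp step1
    convert hcomp using 1
    rfl
  set q : Ω → E1 × E2 × E3 × E4 := fun ω => (U1 ω, U2 ω, U3 ω, U4 ω) with hq
  have hqmeas : Measurable q := hU1.prodMk (hU2.prodMk (hU3.prodMk hU4))
  -- expression of each event as a preimage of a rectangle through `g ∘ q`
  have key : ∀ (S' : Set (E1 × E2 × E3)), MeasurableSet S' → ∀ (T' : Set E4), MeasurableSet T' →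
      μ ({ω | (U1 ω, U2 ω, U3 ω) ∈ S'} ∩ {ω | U4 ω ∈ T'}) =
        ((μ.map U1).prod ((μ.map U2).prod (μ.map U3))) S' * (μ.map U4) T' := by
    intro S' hS' T' hT'
    have hset : {ω | (U1 ω, U2 ω, U3 ω) ∈ S'} ∩ {ω | U4 ω ∈ T'}
        = q ⁻¹' (g ⁻¹' (S' ×ˢ T')) := by
      ext ω; simp [hq, hg, Set.mem_prod, and_comm]
    rw [hset, ← Measure.map_apply hqmeas (hgmeas (hS'.prod hT')),
      ← Measure.map_apply hgmeas (hS'.prod hT'), hindep, hmp.map_eq,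
      Measure.prod_prod]
  have e1 := key S hS T hT
  have e2 := key S hS Set.univ MeasurableSet.univ
  have e3 := key Set.univ MeasurableSet.univ T hT
  simp only [Set.mem_univ, Set.setOf_true, Set.inter_univ, Set.univ_inter,
    measure_univ, mul_one, one_mul] at e2 e3
  rw [e1, e2, e3]

end Aux

/-- In the SCM with `X = fX(U_XZ, U_X)`, `Z = fZ(X, U_XZ, U_Z)`, `Y = fY(X, Z, U_Y)`
(edges `X → Z`, `Z → Y`, `X → Y` and latent confounder `X ↔ Z`), with mutually
independent exogenous variables, the conditional counterfactual
`P(Y_x = y | Z_x = z, X = x')` equals the observational conditional probability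
`P(Y = y | X = x, Z = z)`, provided both conditioning events have positive
probability. -/
theorem conditional_counterfactual_eq_observational
    {Ω : Type*} [MeasurableSpace Ω] (μ : Measure Ω) [IsProbabilityMeasure μ]
    {EXZ EX EZ EY XV ZV YV : Type*}
    [MeasurableSpace EXZ] [MeasurableSpace EX] [MeasurableSpace EZ] [MeasurableSpace EY]
    [MeasurableSpace XV] [MeasurableSpace ZV] [MeasurableSpace YV]
    [MeasurableSingletonClass XV] [MeasurableSingletonClass ZV]
    [MeasurableSingletonClass YV]
    (UXZ : Ω → EXZ) (UX : Ω → EX) (UZ : Ω → EZ) (UY : Ω → EY)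
    (fX : EXZ → EX → XV) (fZ : XV → EXZ → EZ → ZV) (fY : XV → ZV → EY → YV)
    (hUXZ : Measurable UXZ) (hUX : Measurable UX) (hUZ : Measurable UZ)
    (hUY : Measurable UY)
    (hfX : Measurable fun p : EXZ × EX => fX p.1 p.2)
    (hfZ : Measurable fun p : XV × EXZ × EZ => fZ p.1 p.2.1 p.2.2)
    (hfY : Measurable fun p : XV × ZV × EY => fY p.1 p.2.1 p.2.2)
    (hindep : μ.map (fun ω => (UXZ ω, UX ω, UZ ω, UY ω)) =
      ((μ.map UXZ).prod ((μ.map UX).prod ((μ.map UZ).prod (μ.map UY)))))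
    (x x' : XV) (z : ZV) (y : YV)
    (hpos₁ : μ {ω | fZ x (UXZ ω) (UZ ω) = z ∧ fX (UXZ ω) (UX ω) = x'} ≠ 0)
    (hpos₂ : μ {ω | fX (UXZ ω) (UX ω) = x ∧
        fZ (fX (UXZ ω) (UX ω)) (UXZ ω) (UZ ω) = z} ≠ 0) :
    (μ[|{ω | fZ x (UXZ ω) (UZ ω) = z ∧ fX (UXZ ω) (UX ω) = x'}])
        {ω | fY x (fZ x (UXZ ω) (UZ ω)) (UY ω) = y}
      = (μ[|{ω | fX (UXZ ω) (UX ω) = x ∧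
            fZ (fX (UXZ ω) (UX ω)) (UXZ ω) (UZ ω) = z}])
          {ω | fY (fX (UXZ ω) (UX ω)) (fZ (fX (UXZ ω) (UX ω)) (UXZ ω) (UZ ω)) (UY ω) = y}
      := by
  classical
  -- sets in the triple space
  set S₁ : Set (EXZ × EX × EZ) := {p | fZ x p.1 p.2.2 = z ∧ fX p.1 p.2.1 = x'} with hS₁def
  set S₂ : Set (EXZ × EX × EZ) :=
    {p | fX p.1 p.2.1 = x ∧ fZ (fX p.1 p.2.1) p.1 p.2.2 = z} with hS₂def
  set T : Set EY := {e | fY x z e = y} with hTdef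
  have hXmeas : Measurable fun p : EXZ × EX × EZ => fX p.1 p.2.1 :=
    hfX.comp (measurable_fst.prodMk (measurable_fst.comp measurable_snd))
  have hZxmeas : Measurable fun p : EXZ × EX × EZ => fZ x p.1 p.2.2 :=
    hfZ.comp (measurable_const.prodMk
      (measurable_fst.prodMk (measurable_snd.comp measurable_snd)))
  have hZmeas : Measurable fun p : EXZ × EX × EZ => fZ (fX p.1 p.2.1) p.1 p.2.2 :=
    hfZ.comp (hXmeas.prodMk
      (measurable_fst.prodMk (measurable_snd.comp measurable_snd)))
  have hS₁ : MeasurableSet S₁ :=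
    (hZxmeas (measurableSet_singleton z)).inter (hXmeas (measurableSet_singleton x'))
  have hS₂ : MeasurableSet S₂ :=
    (hXmeas (measurableSet_singleton x)).inter (hZmeas (measurableSet_singleton z))
  have hT : MeasurableSet T := by
    have : Measurable fun e : EY => fY x z e :=
      hfY.comp (measurable_const.prodMk (measurable_const.prodMk measurable_id))
    exact this (measurableSet_singleton y)
  -- the conditioning events
  have hA₁ : {ω | fZ x (UXZ ω) (UZ ω) = z ∧ fX (UXZ ω) (UX ω) = x'}
      = {ω | (UXZ ω, UX ω, UZ ω) ∈ S₁} := rfl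
  have hA₂ : {ω | fX (UXZ ω) (UX ω) = x ∧
      fZ (fX (UXZ ω) (UX ω)) (UXZ ω) (UZ ω) = z}
      = {ω | (UXZ ω, UX ω, UZ ω) ∈ S₂} := rfl
  have htriple : Measurable fun ω => (UXZ ω, UX ω, UZ ω) :=
    hUXZ.prodMk (hUX.prodMk hUZ)
  have hA₁m : MeasurableSet {ω | (UXZ ω, UX ω, UZ ω) ∈ S₁} := htriple hS₁
  have hA₂m : MeasurableSet {ω | (UXZ ω, UX ω, UZ ω) ∈ S₂} := htriple hS₂
  -- intersections simplify on the conditioning events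
  have hint₁ : {ω | (UXZ ω, UX ω, UZ ω) ∈ S₁} ∩
      {ω | fY x (fZ x (UXZ ω) (UZ ω)) (UY ω) = y}
      = {ω | (UXZ ω, UX ω, UZ ω) ∈ S₁} ∩ {ω | UY ω ∈ T} := by
    ext ω
    simp only [Set.mem_inter_iff, Set.mem_setOf_eq, hS₁def, hTdef]
    constructor
    · rintro ⟨⟨hz, hx⟩, hy⟩; exact ⟨⟨hz, hx⟩, by rwa [hz] at hy⟩
    · rintro ⟨⟨hz, hx⟩, hy⟩; exact ⟨⟨hz, hx⟩, by rwa [hz]⟩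
  have hint₂ : {ω | (UXZ ω, UX ω, UZ ω) ∈ S₂} ∩
      {ω | fY (fX (UXZ ω) (UX ω)) (fZ (fX (UXZ ω) (UX ω)) (UXZ ω) (UZ ω)) (UY ω) = y}
      = {ω | (UXZ ω, UX ω, UZ ω) ∈ S₂} ∩ {ω | UY ω ∈ T} := by
    ext ω
    simp only [Set.mem_inter_iff, Set.mem_setOf_eq, hS₂def, hTdef]
    constructor
    · rintro ⟨⟨hx, hz⟩, hy⟩; refine ⟨⟨hx, hz⟩, ?_⟩; rw [hx] at hy hz; rwa [hz] at hy
    · rintro ⟨⟨hx, hz⟩, hy⟩; rw [hx] at hz ⊢; rw [hz]; exact ⟨⟨rfl, rfl⟩, hy⟩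
  have hf₁ := factor_lemma μ UXZ UX UZ UY hUXZ hUX hUZ hUY hindep hS₁ hT
  have hf₂ := factor_lemma μ UXZ UX UZ UY hUXZ hUX hUZ hUY hindep hS₂ hT
  rw [hA₁] at hpos₁ ⊢
  rw [hA₂] at hpos₂ ⊢
  rw [cond_apply hA₁m, cond_apply hA₂m, hint₁, hint₂, hf₁, hf₂,
    ← mul_assoc, ← mul_assoc,
    ENNReal.inv_mul_cancel hpos₁ (measure_ne_top μ _),
    ENNReal.inv_mul_cancel hpos₂ (measure_ne_top μ _)]
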